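/- Let ℓ > 0, let y : [0, ℓ] → ℝⁿ be differentiable with derivative y' that is Lipschitz continuous with constant L ≥ 0, and let p : [0, ℓ] → ℝⁿ be the quadratic polynomial p(t) = ((y'(ℓ) − y'(0))/(2ℓ))·t² + y'(0)·t + y(0), which satisfies p(0) = y(0), p'(0) = y'(0), and p'(ℓ) = y'(ℓ). Then ‖y(t) − p(t)‖ ≤ L·t² for all t ∈ [0, ℓ]; in particular the interpolation error on the whole interval is at most L·ℓ². -/

import Mathlib

open Set

/-- the quadratic interpolant matching the value at the left endpoint and
the slopes at both endpoints approximates a `C^{1,1}` curve with error at most `L·t²`,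
hence at most `L·ℓ²` on the whole interval. -/
theorem stmt_12 (n : ℕ) (l : ℝ) (hl : 0 < l) (L : ℝ) (hL : 0 ≤ L)
    (y y' : ℝ → (Fin n → ℝ))
    (hderiv : ∀ t ∈ Icc (0 : ℝ) l, HasDerivWithinAt y (y' t) (Icc (0 : ℝ) l) t)
    (hlip : ∀ t ∈ Icc (0 : ℝ) l, ∀ t' ∈ Icc (0 : ℝ) l,
      ‖y' t - y' t'‖ ≤ L * |t - t'|)
    (p : ℝ → (Fin n → ℝ))
    (hp : ∀ t : ℝ, p t = (t ^ 2 / (2 * l)) • (y' l - y' 0) + t • y' 0 + y 0) :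
    p 0 = y 0 ∧ HasDerivAt p (y' 0) 0 ∧ HasDerivAt p (y' l) l ∧
      ∀ t ∈ Icc (0 : ℝ) l, ‖y t - p t‖ ≤ L * t ^ 2 ∧ ‖y t - p t‖ ≤ L * l ^ 2 := by
  have hpe : p = fun t => (t ^ 2 / (2 * l)) • (y' l - y' 0) + t • y' 0 + y 0 := funext hp
  have hv : ∀ x : ℝ, HasDerivAt p ((x / l) • (y' l - y' 0) + y' 0) x := by
    intro x
    have hc : HasDerivAt (fun t : ℝ => t ^ 2 / (2 * l)) (x / l) x := by
      have := (hasDerivAt_pow 2 x).div_const (2 * l)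
      refine this.congr_deriv ?_
      field_simp
      ring
    have h1 : HasDerivAt (fun t : ℝ => (t ^ 2 / (2 * l)) • (y' l - y' 0))
        ((x / l) • (y' l - y' 0)) x := hc.smul_const (y' l - y' 0)
    have h2 : HasDerivAt (fun t : ℝ => t • y' 0) (y' 0) x := by
      simpa using (hasDerivAt_id x).smul_const (y' 0)
    have := (h1.add h2).add_const (y 0)
    rw [hpe]
    exact this
  have hp0 : p 0 = y 0 := by rw [hp]; simp
  have hd0 : HasDerivAt p (y' 0) 0 := by simpa using hv 0
  have hdl : HasDerivAt p (y' l) l := by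
    have := hv l
    rw [div_self hl.ne', one_smul, sub_add_cancel] at this
    exact this
  refine ⟨hp0, hd0, hdl, ?_⟩
  -- error bound
  set g : ℝ → (Fin n → ℝ) := fun t => y t - p t with hg
  set g' : ℝ → (Fin n → ℝ) := fun t => y' t - ((t / l) • (y' l - y' 0) + y' 0) with hg'
  have hyc : ContinuousOn y (Icc 0 l) := fun t ht => (hderiv t ht).continuousWithinAt
  have hpc : ContinuousOn p (Icc 0 l) := fun t _ => (hv t).continuousAt.continuousWithinAt
  have hgc : ContinuousOn g (Icc 0 l) := hyc.sub hpc
  have hgd : ∀ x ∈ Ico (0 : ℝ) l, HasDerivWithinAt g (g' x) (Ici x) x := by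
    intro x hx
    have h1 : HasDerivWithinAt y (y' x) (Ici x) x :=
      (hderiv x (Ico_subset_Icc_self hx)).mono_of_mem_nhdsWithin
        (Icc_mem_nhdsGE_of_mem hx)
    exact h1.sub (hv x).hasDerivWithinAt
  have hB : ∀ x : ℝ, HasDerivAt (fun t => L * t ^ 2) (2 * L * x) x := by
    intro x
    have := (hasDerivAt_pow 2 x).const_mul L
    refine this.congr_deriv ?_
    push_cast
    ring
  have bound : ∀ x ∈ Ico (0 : ℝ) l, ‖g' x‖ ≤ 2 * L * x := by
    intro x hx
    have hx' : x ∈ Icc (0 : ℝ) l := Ico_subset_Icc_self hx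
    have h0 : (0 : ℝ) ∈ Icc (0 : ℝ) l := ⟨le_rfl, hl.le⟩
    have hlm : (l : ℝ) ∈ Icc (0 : ℝ) l := ⟨hl.le, le_rfl⟩
    have e1 : ‖y' x - y' 0‖ ≤ L * x := by
      have := hlip x hx' 0 h0
      rwa [sub_zero, abs_of_nonneg hx.1] at this
    have e2 : ‖y' l - y' 0‖ ≤ L * l := by
      have := hlip l hlm 0 h0
      rwa [sub_zero, abs_of_nonneg hl.le] at this
    have : g' x = (y' x - y' 0) - (x / l) • (y' l - y' 0) := by
      simp only [hg']; abel
    rw [this]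
    calc ‖(y' x - y' 0) - (x / l) • (y' l - y' 0)‖
        ≤ ‖y' x - y' 0‖ + ‖(x / l) • (y' l - y' 0)‖ := norm_sub_le _ _
      _ ≤ L * x + (x / l) * (L * l) := by
          refine add_le_add e1 ?_
          rw [norm_smul, Real.norm_eq_abs, abs_of_nonneg (div_nonneg hx.1 hl.le)]
          exact mul_le_mul_of_nonneg_left e2 (div_nonneg hx.1 hl.le)
      _ = 2 * L * x := by field_simp; ring
  have ha : ‖g 0‖ ≤ L * 0 ^ 2 := by simp [hg, hp0]
  have key := image_norm_le_of_norm_deriv_right_le_deriv_boundary hgc hgd ha hB bound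
  intro t ht
  have h1 : ‖y t - p t‖ ≤ L * t ^ 2 := key ht
  refine ⟨h1, h1.trans ?_⟩
  have : t ^ 2 ≤ l ^ 2 := by nlinarith [ht.1, ht.2]
  nlinarith
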